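/- There exists a symmetric skew-supermodular function p : 2^V → ℤ ∪ {−∞} and a weighted hypergraph (H = (V, E), w) with b_{(H,w)}(X) ≥ p(X) for all X ⊆ V such that every hypergraph (H* = (V, E*), w*) obtained by merging hyperedges of (H, w) and satisfying d_{(H*,w*)}(X) ≥ p(X) for all X ⊆ V has |E* \ E| = Ω(|V|²). Concretely: fix u ∈ V with |V| = n ≥ 3, let p({u}) = p(V − u) = C(n−1, 2) and p(X) = −∞ otherwise; let E consist of all pairs {a,b} ⊆ V − u with weight 1 and the singleton {u} with weight C(n−1,2). Then the unique strong cover obtainable by merging is the hypergraph with hyperedges {u, a, b} for all pairs {a,b} ⊆ V − u, each of weight 1, so the number of new hyperedges is C(n−1,2). -/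
import Mathlib


/-- One merging step on the multi-hypergraph: replace two disjoint hyperedges by
their union. -/
def MergeStep {V : Type*} [DecidableEq V] (A B : Multiset (Finset V)) : Prop :=
  ∃ e f C, e ∩ f = ∅ ∧ A = e ::ₘ f ::ₘ C ∧ B = (e ∪ f) ::ₘ C

/-- Obtained by repeatedly merging disjoint hyperedges. -/
def Merged {V : Type*} [DecidableEq V] : Multiset (Finset V) → Multiset (Finset V) → Prop :=
  Relation.ReflTransGen MergeStep

/-- Unweighted multi-hypergraph expansion of a weighted hypergraph. -/
def expand {V : Type*} [DecidableEq V] (E : Finset (Finset V)) (w : Finset V → ℕ) :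
    Multiset (Finset V) :=
  ∑ e ∈ E, Multiset.replicate (w e) e

/-- Coverage of a multi-hypergraph (counting multiplicity). -/
def mcov {V : Type*} [DecidableEq V] (M : Multiset (Finset V)) (X : Finset V) : ℕ :=
  (M.filter fun e => (e ∩ X).Nonempty).card

/-- Cut value of a multi-hypergraph (counting multiplicity). -/
def mcut {V : Type*} [DecidableEq V] (M : Multiset (Finset V)) (X : Finset V) : ℕ :=
  (M.filter fun e => (e ∩ X).Nonempty ∧ (e \ X).Nonempty).card

lemma mem_msup {β : Type*} [DecidableEq β] {v : β} {s : Multiset (Finset β)} :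
    v ∈ s.sup ↔ ∃ t ∈ s, v ∈ t := by
  induction s using Multiset.induction with
  | empty => simp [Multiset.sup_zero]
  | cons a s ih =>
      simp only [Multiset.sup_cons, Multiset.mem_cons]
      constructor
      · intro hv
        rcases Finset.mem_union.mp hv with h | h
        · exact ⟨a, Or.inl rfl, h⟩
        · obtain ⟨t, ht, hvt⟩ := ih.mp h
          exact ⟨t, Or.inr ht, hvt⟩
      · rintro ⟨t, (rfl | ht), hv⟩
        · exact Finset.mem_union.mpr (Or.inl hv)
        · exact Finset.mem_union.mpr (Or.inr (ih.mpr ⟨t, ht, hv⟩))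

lemma countP_join' {α : Type*} (p : α → Prop) [DecidablePred p] (S : Multiset (Multiset α)) :
    Multiset.countP p S.join = (S.map (Multiset.countP p)).sum := by
  induction S using Multiset.induction with
  | empty => simp
  | cons a s ih => simp [Multiset.join_cons, Multiset.countP_add, ih]

lemma merged_parts {V : Type*} [DecidableEq V] {M₀ M : Multiset (Finset V)}
    (h : Merged M₀ M) :
    ∃ P : Multiset (Multiset (Finset V)), P.join = M₀ ∧ M = P.map Multiset.sup := by
  induction h with
  | refl =>
      refine ⟨M₀.map (fun e => {e}), ?_, ?_⟩
      · rw [← Multiset.bind, Multiset.bind_singleton]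
        simp
      · rw [Multiset.map_map]
        simp [Function.comp, Multiset.sup_singleton]
  | tail _ hstep ih =>
      obtain ⟨P, hjoin, hmap⟩ := ih
      obtain ⟨e, f, C, hdisj, hB, hC⟩ := hstep
      rw [hB] at hmap
      obtain ⟨pe, hpeP, hpe, h1⟩ := (Multiset.map_eq_cons _ _ _ _).mpr hmap.symm
      obtain ⟨pf, hpfP, hpf, h2⟩ := (Multiset.map_eq_cons _ _ _ _).mpr h1
      refine ⟨(pe + pf) ::ₘ ((P.erase pe).erase pf), ?_, ?_⟩
      · rw [Multiset.join_cons, ← hjoin]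
        conv_rhs => rw [← Multiset.cons_erase hpeP, ← Multiset.cons_erase hpfP]
        rw [Multiset.join_cons, Multiset.join_cons, add_assoc]
      · rw [hC, Multiset.map_cons, h2, Multiset.sup_add, hpe, hpf]
        congr 1

/-- There is a symmetric skew-supermodular function `p : 2^V → ℤ ∪ {−∞}` and a weighted
hypergraph weakly covering `p` such that every hypergraph obtained from it by merging
hyperedges that strongly covers `p` has at least `C(n−1, 2) = Ω(|V|²)` new hyperedges. -/
theorem weak_to_strong_cover_quadratic_lower_bound :
    ∀ n : ℕ, 3 ≤ n →
      ∃ (p : Finset (Fin n) → WithBot ℤ) (E : Finset (Finset (Fin n)))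
        (w : Finset (Fin n) → ℕ),
        (∀ X : Finset (Fin n), p X = p Xᶜ) ∧
        (∀ X Y : Finset (Fin n),
          p X + p Y ≤ p (X ∩ Y) + p (X ∪ Y) ∨ p X + p Y ≤ p (X \ Y) + p (Y \ X)) ∧
        (∀ e ∈ E, 0 < w e) ∧
        (∀ X : Finset (Fin n), p X ≤ ((mcov (expand E w) X : ℤ) : WithBot ℤ)) ∧
        (∀ M : Multiset (Finset (Fin n)), Merged (expand E w) M →
          (∀ X : Finset (Fin n), p X ≤ ((mcut M X : ℤ) : WithBot ℤ)) →
          (n - 1).choose 2 ≤ (M.toFinset \ E).card) := by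
  intro n hn
  have hn0 : 0 < n := by omega
  set u : Fin n := ⟨0, hn0⟩ with hu
  set N : ℕ := (n - 1).choose 2 with hNdef
  have hNpos : 0 < N := Nat.choose_pos (by omega)
  set Pairs : Finset (Finset (Fin n)) := Finset.powersetCard 2 ({u}ᶜ) with hPairs
  have hPairsCard : Pairs.card = N := by
    rw [hPairs, Finset.card_powersetCard]
    congr 1
    rw [Finset.card_compl, Finset.card_singleton, Fintype.card_fin]
  have hpairmem : ∀ t ∈ Pairs, t.card = 2 ∧ u ∉ t := by
    intro t ht
    rw [hPairs, Finset.mem_powersetCard] at ht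
    exact ⟨ht.2, fun hmem => (Finset.mem_compl.mp (ht.1 hmem)) (Finset.mem_singleton_self u)⟩
  have huP : ({u} : Finset (Fin n)) ∉ Pairs := by
    intro h
    have := (hpairmem _ h).1
    simp at this
  set E : Finset (Finset (Fin n)) := insert {u} Pairs with hE
  set w : Finset (Fin n) → ℕ := fun e => if e = {u} then N else 1 with hw
  have hexp : expand E w = Multiset.replicate N {u} + Pairs.val := by
    have h1 : w ({u} : Finset (Fin n)) = N := by simp [hw]
    have h2 : ∑ e ∈ Pairs, Multiset.replicate (w e) e = Pairs.val := by
      rw [← Finset.sum_multiset_singleton Pairs]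
      refine Finset.sum_congr rfl fun e he => ?_
      have hne : e ≠ {u} := fun h => huP (h ▸ he)
      simp [hw, hne]
    rw [expand, hE, Finset.sum_insert huP, h1, h2]
  refine ⟨fun X => if X = {u} ∨ X = ({u}ᶜ : Finset (Fin n)) then ((N : ℤ) : WithBot ℤ) else ⊥,
    E, w, ?_, ?_, ?_, ?_, ?_⟩
  · -- symmetry
    intro X
    have hiff : (X = {u} ∨ X = ({u}ᶜ : Finset (Fin n))) ↔
        (Xᶜ = {u} ∨ Xᶜ = ({u}ᶜ : Finset (Fin n))) := by
      constructor
      · rintro (rfl | rfl)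
        · exact Or.inr rfl
        · exact Or.inl (compl_compl _)
      · rintro (h | h)
        · exact Or.inr (by rw [← h, compl_compl])
        · exact Or.inl (by
            have := congrArg compl h
            rwa [compl_compl, compl_compl] at this)
    exact if_congr hiff rfl rfl
  · -- skew supermodular
    intro X Y
    dsimp only
    by_cases hX : X = {u} ∨ X = ({u}ᶜ : Finset (Fin n))
    swap
    · left; rw [if_neg hX, WithBot.bot_add]; exact bot_le
    by_cases hY : Y = {u} ∨ Y = ({u}ᶜ : Finset (Fin n))
    swap
    · left; rw [if_neg hY, WithBot.add_bot]; exact bot_le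
    have hd1 : ({u} : Finset (Fin n)) \ {u}ᶜ = {u} := by
      ext x
      simp only [Finset.mem_sdiff, Finset.mem_compl, Finset.mem_singleton, not_not]
      tauto
    have hd2 : ({u}ᶜ : Finset (Fin n)) \ {u} = {u}ᶜ := by
      ext x
      simp only [Finset.mem_sdiff, Finset.mem_compl, Finset.mem_singleton]
      tauto
    rcases hX with rfl | rfl <;> rcases hY with rfl | rfl
    · left; rw [Finset.inter_self, Finset.union_self]
    · right; rw [hd1, hd2]
    · right; rw [hd1, hd2]
    · left; rw [Finset.inter_self, Finset.union_self]
  · -- positivity of weights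
    intro e he
    rw [hw]
    dsimp only
    split
    · exact hNpos
    · exact Nat.one_pos
  · -- weak cover
    intro X
    dsimp only
    by_cases hX : X = {u} ∨ X = ({u}ᶜ : Finset (Fin n))
    swap
    · rw [if_neg hX]; exact bot_le
    rw [if_pos hX]
    have key : N ≤ mcov (expand E w) X := by
      rcases hX with rfl | rfl
      · rw [hexp, mcov, Multiset.filter_add, Multiset.card_add]
        have hfe : Multiset.filter (fun e => (e ∩ ({u} : Finset (Fin n))).Nonempty)
            (Multiset.replicate N {u}) = Multiset.replicate N {u} := by
          rw [Multiset.filter_eq_self]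
          intro a ha
          rw [Multiset.eq_of_mem_replicate ha]
          simp
        rw [hfe, Multiset.card_replicate]
        exact Nat.le_add_right _ _
      · rw [hexp, mcov, Multiset.filter_add, Multiset.card_add]
        have hfe : Multiset.filter (fun e => (e ∩ ({u}ᶜ : Finset (Fin n))).Nonempty)
            Pairs.val = Pairs.val := by
          rw [Multiset.filter_eq_self]
          intro a ha
          obtain ⟨hc, hmem⟩ := hpairmem a (Finset.mem_val.mp ha)
          obtain ⟨x, hx⟩ := Finset.card_pos.mp (by omega : 0 < a.card)
          exact ⟨x, Finset.mem_inter.mpr ⟨hx, Finset.mem_compl.mpr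
            (fun hxs => hmem (Finset.mem_singleton.mp hxs ▸ hx))⟩⟩
        rw [hfe, ← Finset.card, hPairsCard]
        exact Nat.le_add_left _ _
    exact_mod_cast key
  · -- main lower bound
    intro M hM hstrong
    obtain ⟨P, hjoin, hmap⟩ := merged_parts hM
    have hcut : N ≤ mcut M {u} := by
      have h := hstrong {u}
      dsimp only at h
      rw [if_pos (Or.inl rfl)] at h
      exact_mod_cast h
    have hcard : mcut M ({u} : Finset (Fin n)) =
        Multiset.card (P.filter (fun s =>
          (s.sup ∩ ({u} : Finset (Fin n))).Nonempty ∧ (s.sup \ {u}).Nonempty)) := by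
      rw [mcut, hmap, ← Multiset.countP_eq_card_filter, Multiset.countP_map]
    set G : Multiset (Multiset (Finset (Fin n))) := P.filter (fun s =>
      (s.sup ∩ ({u} : Finset (Fin n))).Nonempty ∧ (s.sup \ {u}).Nonempty) with hG
    have hGN : N ≤ Multiset.card G := by rw [hG, ← hcard]; exact hcut
    have helt : ∀ s ∈ P, ∀ t ∈ s, t = {u} ∨ t ∈ Pairs := by
      intro s hs t ht
      have hj : t ∈ P.join := Multiset.mem_join.mpr ⟨s, hs, ht⟩
      rw [hjoin, hexp] at hj
      rcases Multiset.mem_add.mp hj with h | h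
      · exact Or.inl (Multiset.eq_of_mem_replicate h)
      · exact Or.inr (Finset.mem_val.mp h)
    have htotal : (P.map (fun s => Multiset.countP (fun t => ¬ t = {u}) s)).sum = N := by
      rw [← countP_join', hjoin, hexp, Multiset.countP_add]
      have h1 : Multiset.countP (fun t => ¬ t = {u})
          (Multiset.replicate N ({u} : Finset (Fin n))) = 0 :=
        Multiset.countP_eq_zero.mpr (fun a ha => by
          simp [Multiset.eq_of_mem_replicate ha])
      have h2 : Multiset.countP (fun t => ¬ t = {u}) Pairs.val = Multiset.card Pairs.val :=
        Multiset.countP_eq_card.mpr (fun a ha h => huP (h ▸ Finset.mem_val.mp ha))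
      rw [h1, h2, ← Finset.card, hPairsCard, Nat.zero_add]
    have hone : ∀ s ∈ G, 1 ≤ Multiset.countP (fun t => ¬ t = {u}) s := by
      intro s hs
      rw [hG, Multiset.mem_filter] at hs
      obtain ⟨v, hv⟩ := hs.2.2
      rw [Finset.mem_sdiff] at hv
      obtain ⟨t, ht, hvt⟩ := mem_msup.mp hv.1
      refine Multiset.countP_pos.mpr ⟨t, ht, ?_⟩
      rintro rfl
      exact hv.2 hvt
    have hsumG : Multiset.card G ≤
        (G.map (fun s => Multiset.countP (fun t => ¬ t = {u}) s)).sum := by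
      calc Multiset.card G = (G.map (fun _ => 1)).sum := by
            rw [Multiset.map_const', Multiset.sum_replicate, smul_eq_mul, mul_one]
        _ ≤ _ := Multiset.sum_map_le_sum_map _ _ hone
    have hsub : (G.map (fun s => Multiset.countP (fun t => ¬ t = {u}) s)).sum ≤
        (P.map (fun s => Multiset.countP (fun t => ¬ t = {u}) s)).sum := by
      obtain ⟨d, hd⟩ := Multiset.le_iff_exists_add.mp
        (Multiset.map_le_map (hG ▸ Multiset.filter_le _ P))
      rw [hd, Multiset.sum_add]
      exact Nat.le_add_right _ _
    have hGcard : Multiset.card G = N :=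
      le_antisymm (le_trans hsumG (le_trans hsub (le_of_eq htotal))) hGN
    have hsumG_eq : (G.map (fun s => Multiset.countP (fun t => ¬ t = {u}) s)).sum = N :=
      le_antisymm (htotal ▸ hsub) (hGcard ▸ hsumG)
    have hbad : ∀ s ∈ P, s ∉ G → Multiset.countP (fun t => ¬ t = {u}) s = 0 := by
      have hsplit : (P.map (fun s => Multiset.countP (fun t => ¬ t = {u}) s)).sum =
          (G.map (fun s => Multiset.countP (fun t => ¬ t = {u}) s)).sum +
          ((P.filter (fun s => ¬ ((s.sup ∩ ({u} : Finset (Fin n))).Nonempty ∧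
            (s.sup \ {u}).Nonempty))).map
              (fun s => Multiset.countP (fun t => ¬ t = {u}) s)).sum := by
        conv_lhs => rw [← Multiset.filter_add_not (fun s =>
          (s.sup ∩ ({u} : Finset (Fin n))).Nonempty ∧ (s.sup \ {u}).Nonempty) P]
        rw [Multiset.map_add, Multiset.sum_add, hG]
      have hz : ((P.filter (fun s => ¬ ((s.sup ∩ ({u} : Finset (Fin n))).Nonempty ∧
          (s.sup \ {u}).Nonempty))).map
            (fun s => Multiset.countP (fun t => ¬ t = {u}) s)).sum = 0 := by
        omega
      intro s hs hsG
      have hsmem : s ∈ P.filter (fun s => ¬ ((s.sup ∩ ({u} : Finset (Fin n))).Nonempty ∧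
          (s.sup \ {u}).Nonempty)) := by
        rw [Multiset.mem_filter]
        refine ⟨hs, fun hgood => hsG ?_⟩
        rw [hG, Multiset.mem_filter]
        exact ⟨hs, hgood⟩
      exact Multiset.sum_eq_zero_iff.mp hz _ (Multiset.mem_map_of_mem _ hsmem)
    have hgood1 : ∀ s ∈ G, Multiset.countP (fun t => ¬ t = {u}) s = 1 := by
      intro s0 hs0
      by_contra hne
      have h2 : 2 ≤ Multiset.countP (fun t => ¬ t = {u}) s0 := by
        have := hone s0 hs0
        omega
      have hGer : G = s0 ::ₘ G.erase s0 := (Multiset.cons_erase hs0).symm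
      have hrest : Multiset.card (G.erase s0) ≤
          ((G.erase s0).map (fun s => Multiset.countP (fun t => ¬ t = {u}) s)).sum := by
        calc Multiset.card (G.erase s0) = ((G.erase s0).map (fun _ => 1)).sum := by
              rw [Multiset.map_const', Multiset.sum_replicate, smul_eq_mul, mul_one]
          _ ≤ _ := Multiset.sum_map_le_sum_map _ _
                (fun s hs => hone s (Multiset.mem_of_mem_erase hs))
      have hcer : Multiset.card (G.erase s0) = N - 1 := by
        rw [Multiset.card_erase_of_mem hs0, hGcard]
        rfl
      have : N = Multiset.countP (fun t => ¬ t = {u}) s0 +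
          ((G.erase s0).map (fun s => Multiset.countP (fun t => ¬ t = {u}) s)).sum := by
        rw [← hsumG_eq]
        conv_lhs => rw [hGer]
        rw [Multiset.map_cons, Multiset.sum_cons]
      omega
    -- every pair gives a new hyperedge
    have hfinal : ∀ pr ∈ Pairs, ∃ e ∈ M.toFinset \ E, e \ {u} = pr := by
      intro pr hpr
      have hprj : pr ∈ P.join := by
        rw [hjoin, hexp]
        exact Multiset.mem_add.mpr (Or.inr (Finset.mem_val.mpr hpr))
      obtain ⟨s, hsP, hprs⟩ := Multiset.mem_join.mp hprj
      have hprne : ¬ pr = ({u} : Finset (Fin n)) := fun h => huP (h ▸ hpr)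
      have hposc : 0 < Multiset.countP (fun t => ¬ t = {u}) s :=
        Multiset.countP_pos.mpr ⟨pr, hprs, hprne⟩
      have hsG : s ∈ G := by
        by_contra hng
        have := hbad s hsP hng
        omega
      have hs1 : Multiset.countP (fun t => ¬ t = {u}) s = 1 := hgood1 s hsG
      have hfilt : s.filter (fun t => ¬ t = {u}) = {pr} := by
        rw [Multiset.countP_eq_card_filter] at hs1
        obtain ⟨a, ha⟩ := Multiset.card_eq_one.mp hs1
        have hmem : pr ∈ s.filter (fun t => ¬ t = {u}) :=
          Multiset.mem_filter.mpr ⟨hprs, hprne⟩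
        rw [ha] at hmem ⊢
        rw [Multiset.mem_singleton.mp hmem]
      have hsGprop := Multiset.mem_filter.mp (hG ▸ hsG)
      have hu_sup : u ∈ s.sup := by
        obtain ⟨x, hx⟩ := hsGprop.2.1
        rw [Finset.mem_inter, Finset.mem_singleton] at hx
        exact hx.2 ▸ hx.1
      have hupr : u ∉ pr := (hpairmem pr hpr).2
      have hsup : s.sup = {u} ∪ pr := by
        apply Finset.Subset.antisymm
        · intro x hx
          obtain ⟨t, ht, hxt⟩ := mem_msup.mp hx
          rcases helt s hsP t ht with rfl | htP
          · exact Finset.mem_union_left _ hxt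
          · have htf : t ∈ s.filter (fun t => ¬ t = {u}) :=
              Multiset.mem_filter.mpr ⟨ht, fun h => huP (h ▸ htP)⟩
            rw [hfilt, Multiset.mem_singleton] at htf
            rw [htf] at hxt
            exact Finset.mem_union_right _ hxt
        · apply Finset.union_subset
          · exact Finset.singleton_subset_iff.mpr hu_sup
          · exact Multiset.le_sup hprs
      refine ⟨s.sup, ?_, ?_⟩
      · rw [Finset.mem_sdiff]
        constructor
        · rw [Multiset.mem_toFinset, hmap]
          exact Multiset.mem_map_of_mem _ hsP
        · intro hmem
          have hc3 : (s.sup).card = 3 := by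
            rw [hsup, Finset.card_union_of_disjoint
              (Finset.disjoint_singleton_left.mpr hupr), Finset.card_singleton,
              (hpairmem pr hpr).1]
          rw [hE] at hmem
          rcases Finset.mem_insert.mp hmem with h | h
          · rw [h, Finset.card_singleton] at hc3
            omega
          · have := (hpairmem _ h).1
            omega
      · rw [hsup]
        ext x
        simp only [Finset.mem_sdiff, Finset.mem_union, Finset.mem_singleton]
        constructor
        · rintro ⟨h | h, hx⟩
          · exact (hx h).elim
          · exact h
        · intro h
          exact ⟨Or.inr h, fun he => hupr (he ▸ h)⟩
    have himg : Pairs ⊆ (M.toFinset \ E).image (fun e => e \ {u}) := by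
      intro pr hpr
      obtain ⟨e, he, hepr⟩ := hfinal pr hpr
      exact Finset.mem_image.mpr ⟨e, he, hepr⟩
    calc N = Pairs.card := hPairsCard.symm
      _ ≤ ((M.toFinset \ E).image (fun e => e \ {u})).card := Finset.card_le_card himg
      _ ≤ (M.toFinset \ E).card := Finset.card_image_le
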